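/- Let H be a finite index set, D, G complex matrices of size |H| with det D ≠ 0, and let (Q_i(w))_{i∈H} be the unique solution of the Q-system ∏_{j∈H} Q_j(w)^{D_{ij}} + w_i ∏_{j∈H} Q_j(w)^{G_{ij}} = 1. For ν ∈ ℂ^H set Q^ν_{D,G}(w) = ∏_{i∈H} (Q_i(w))^{ν_i}. Then Q^ν_{D,G}(w) = R^ν_{D,G}(w) as formal power series. -/

import Mathlib

noncomputable def binomC (a : ℂ) (b : ℕ) : ℂ :=
  (∏ j ∈ Finset.range b, (a - (j : ℂ))) / (Nat.factorial b : ℂ)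

noncomputable def cpow {σ : Type*} (f : MvPowerSeries σ ℂ) (α : ℂ) : MvPowerSeries σ ℂ :=
  fun N => ∑ k ∈ Finset.range (N.sum (fun _ e => e) + 1),
    binomC α k * MvPowerSeries.coeff N ((f - 1) ^ k)

/-- `P_i(D,G;ν,N) = -Σ_j ν_j (D⁻¹)_{ji} - Σ_j N_j (G D⁻¹)_{ji}`. -/
noncomputable def Pfin {H : Type*} [Fintype H] [DecidableEq H]
    (D G : Matrix H H ℂ) (ν : H → ℂ) (N : H →₀ ℕ) (i : H) : ℂ :=
  -(∑ j, ν j * D⁻¹ j i) - ∑ j, (N j : ℂ) * (G * D⁻¹) j i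

/-- The power series `K^ν_{D,G}(w) = Σ_N (∏_{i∈H(N)} binom(P_i+N_i, N_i)) w^N`. -/
noncomputable def Kfin {H : Type*} [Fintype H] [DecidableEq H]
    (D G : Matrix H H ℂ) (ν : H → ℂ) : MvPowerSeries H ℂ :=
  fun N => ∏ i ∈ N.support, binomC (Pfin D G ν N i + (N i : ℂ)) (N i)

/-- `F_{ij}(D,G;ν,N) = δ_{ij} P_j + (G D⁻¹)_{ij} N_j`. -/
noncomputable def Ffin {H : Type*} [Fintype H] [DecidableEq H]
    (D G : Matrix H H ℂ) (ν : H → ℂ) (N : H →₀ ℕ) (i j : H) : ℂ :=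
  (if i = j then Pfin D G ν N j else 0) + (G * D⁻¹) i j * (N j : ℂ)

/-- The power series
`R^ν_{D,G}(w) = Σ_N (det_{H(N)} F) (∏_{i∈H(N)} (1/N_i) binom(P_i+N_i-1, N_i-1)) w^N`. -/
noncomputable def Rfin {H : Type*} [Fintype H] [DecidableEq H]
    (D G : Matrix H H ℂ) (ν : H → ℂ) : MvPowerSeries H ℂ :=
  fun N =>
    (Matrix.det (Matrix.of fun i j : N.support => Ffin D G ν N i j)) *
      ∏ i ∈ N.support, (1 / (N i : ℂ)) * binomC (Pfin D G ν N i + (N i : ℂ) - 1) (N i - 1)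

set_option linter.unusedSectionVars false
set_option linter.unusedVariables false

lemma binomC_zero (a : ℂ) : binomC a 0 = 1 := by
  simp [binomC]

lemma factorial_ne' (b : ℕ) : ((Nat.factorial b : ℕ) : ℂ) ≠ 0 := by
  exact_mod_cast Nat.factorial_ne_zero b

lemma succ_ne' (b : ℕ) : ((b : ℂ) + 1) ≠ 0 := by
  exact Nat.cast_add_one_ne_zero b

lemma binomC_succ (a : ℂ) (b : ℕ) :
    binomC a (b + 1) = binomC a b * (a - b) / (b + 1) := by
  unfold binomC
  rw [Finset.prod_range_succ, Nat.factorial_succ]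
  have h1 := factorial_ne' b
  have h2 := succ_ne' b
  rw [div_eq_div_iff (by push_cast; exact mul_ne_zero h2 h1) h2]
  push_cast
  field_simp

lemma binomC_absorb (a : ℂ) (b : ℕ) :
    ((b : ℂ) + 1) * binomC a (b + 1) = (a - b) * binomC a b := by
  rw [binomC_succ]
  have h2 := succ_ne' b
  field_simp

lemma binomC_pascal (a : ℂ) (k : ℕ) :
    binomC a (k + 1) = binomC (a - 1) (k + 1) + binomC (a - 1) k := by
  unfold binomC
  have hre : (∏ j ∈ Finset.range (k+1), (a - (j:ℂ)))
      = a * ∏ j ∈ Finset.range k, (a - 1 - (j:ℂ)) := by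
    rw [Finset.prod_range_succ' (fun j => a - (j:ℂ)) k]
    have : ∀ j ∈ Finset.range k, (a - ((j:ℕ) + 1 : ℕ)) = (a - 1 - (j:ℂ)) := by
      intro j _
      push_cast
      ring
    rw [Finset.prod_congr rfl this]
    push_cast
    ring
  rw [hre, Finset.prod_range_succ]
  have h1 := factorial_ne' k
  have h2 := succ_ne' k
  rw [Nat.factorial_succ]
  push_cast
  field_simp
  ring

lemma binomC_natCast (n k : ℕ) : binomC (n : ℂ) k = (n.choose k : ℂ) := by
  induction k with
  | zero => simp [binomC_zero]
  | succ k ih =>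
    have h2 := succ_ne' k
    rw [binomC_succ, ih]
    rw [div_eq_iff h2]
    have hnat : (n.choose (k+1) * (k+1) : ℕ) = (n.choose k * (n - k) : ℕ) :=
      Nat.choose_succ_right_eq n k
    rcases le_or_gt k n with h | h
    · have hc : ((n - k : ℕ) : ℂ) = (n : ℂ) - k := by
        push_cast [h]; ring
      have hcast := congrArg (fun m : ℕ => (m : ℂ)) hnat
      push_cast at hcast
      rw [hc] at hcast
      linear_combination -hcast
    · have hz1 : n.choose (k+1) = 0 := Nat.choose_eq_zero_of_lt (by omega)
      rw [hz1]
      rcases Nat.lt_or_ge n k with h' | h'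
      · have hz0 : n.choose k = 0 := Nat.choose_eq_zero_of_lt h'
        simp [hz0]
      · have : n = k := by omega
        subst this
        simp

/-- Agreement on naturals implies equality of polynomial functions. -/
lemma polyfun_ext {f g : ℂ → ℂ} (p q : Polynomial ℂ)
    (hf : ∀ x, f x = p.eval x) (hg : ∀ x, g x = q.eval x)
    (h : ∀ n : ℕ, f (n : ℂ) = g (n : ℂ)) : ∀ x, f x = g x := by
  have hpq : p = q := by
    apply Polynomial.eq_of_infinite_eval_eq
    apply Set.Infinite.mono (s := Set.range (fun n : ℕ => (n : ℂ)))
    · rintro x ⟨n, rfl⟩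
      have := h n
      rw [hf, hg] at this
      exact this
    · exact Set.infinite_range_of_injective (fun a b hab => by exact_mod_cast hab)
  intro x
  rw [hf, hg, hpq]

noncomputable def binomCPoly (k : ℕ) : Polynomial ℂ :=
  Polynomial.C (((Nat.factorial k : ℕ) : ℂ)⁻¹) *
    ∏ j ∈ Finset.range k, (Polynomial.X - Polynomial.C (j : ℂ))

lemma binomCPoly_eval (x : ℂ) (k : ℕ) : (binomCPoly k).eval x = binomC x k := by
  simp [binomCPoly, binomC, Polynomial.eval_prod, div_eq_mul_inv, mul_comm]

/-- Chu-Vandermonde over ℂ. -/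
lemma binomC_add (α β : ℂ) (m : ℕ) :
    binomC (α + β) m = ∑ k ∈ Finset.range (m + 1), binomC α k * binomC β (m - k) := by
  have hnat : ∀ a b : ℕ, binomC ((a : ℂ) + (b : ℂ)) m
      = ∑ k ∈ Finset.range (m + 1), binomC (a : ℂ) k * binomC (b : ℂ) (m - k) := by
    intro a b
    have h1 : ((a : ℂ) + (b : ℂ)) = ((a + b : ℕ) : ℂ) := by push_cast; ring
    rw [h1, binomC_natCast]
    have h2 : ∀ k, binomC (a : ℂ) k * binomC (b : ℂ) (m - k)
        = ((a.choose k * b.choose (m - k) : ℕ) : ℂ) := by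
      intro k
      rw [binomC_natCast, binomC_natCast]
      push_cast; ring
    rw [Finset.sum_congr rfl (fun k _ => h2 k), ← Nat.cast_sum]
    congr 1
    rw [Nat.add_choose_eq]
    exact Finset.Nat.sum_antidiagonal_eq_sum_range_succ (f := fun i j => a.choose i * b.choose j) m
  have hhalf : ∀ a : ℕ, ∀ γ : ℂ, binomC ((a : ℂ) + γ) m
      = ∑ k ∈ Finset.range (m + 1), binomC (a : ℂ) k * binomC γ (m - k) := by
    intro a
    exact polyfun_ext
      (f := fun x => binomC ((a : ℂ) + x) m)
      (g := fun x => ∑ k ∈ Finset.range (m + 1), binomC (a : ℂ) k * binomC x (m - k))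
      (p := Polynomial.C (((Nat.factorial m : ℕ) : ℂ)⁻¹) *
        ∏ j ∈ Finset.range m, (Polynomial.C ((a : ℂ)) + Polynomial.X - Polynomial.C (j : ℂ)))
      (q := ∑ k ∈ Finset.range (m + 1), Polynomial.C (binomC (a : ℂ) k) * binomCPoly (m - k))
      (fun x => by simp [binomC, Polynomial.eval_prod, div_eq_mul_inv, mul_comm])
      (fun x => by simp [Polynomial.eval_finset_sum, binomCPoly_eval])
      (fun n => hnat a n)
  exact polyfun_ext
    (f := fun x => binomC (x + β) m)
    (g := fun x => ∑ k ∈ Finset.range (m + 1), binomC x k * binomC β (m - k))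
    (p := Polynomial.C (((Nat.factorial m : ℕ) : ℂ)⁻¹) *
      ∏ j ∈ Finset.range m, (Polynomial.X + Polynomial.C β - Polynomial.C (j : ℂ)))
    (q := ∑ k ∈ Finset.range (m + 1), binomCPoly k * Polynomial.C (binomC β (m - k)))
    (fun x => by simp [binomC, Polynomial.eval_prod, div_eq_mul_inv, mul_comm])
    (fun x => by simp [Polynomial.eval_finset_sum, binomCPoly_eval])
    (fun n => hhalf n β) α

section PS

open MvPowerSeries

variable {σ : Type*} [DecidableEq σ]

/-- total degree of an exponent -/
def degN (N : σ →₀ ℕ) : ℕ := N.sum fun _ e => e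

lemma degN_add (a b : σ →₀ ℕ) : degN (a + b) = degN a + degN b :=
  Finsupp.sum_add_index' (fun _ => rfl) (fun _ _ _ => rfl)

lemma degN_eq_zero_iff (N : σ →₀ ℕ) : degN N = 0 ↔ N = 0 := by
  constructor
  · intro h
    ext a
    by_contra ha
    have hmem : a ∈ N.support := Finsupp.mem_support_iff.2 (by simpa using ha)
    exact ha ((Finset.sum_eq_zero_iff).1 h a hmem)
  · intro h; subst h; rfl

lemma coeff_apply' (f : MvPowerSeries σ ℂ) (N : σ →₀ ℕ) : coeff N f = f N := rfl

lemma coeff_pow_eq_zero {g : MvPowerSeries σ ℂ} (hg : constantCoeff g = 0) :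
    ∀ (k : ℕ) (N : σ →₀ ℕ), degN N < k → coeff N (g ^ k) = 0 := by
  intro k
  induction k with
  | zero => intro N h; omega
  | succ k ih =>
    intro N h
    rw [pow_succ, coeff_mul]
    apply Finset.sum_eq_zero
    rintro ⟨p1, p2⟩ hp
    rw [Finset.HasAntidiagonal.mem_antidiagonal] at hp
    by_cases h2 : p2 = 0
    · subst h2
      have h0 : coeff (0 : σ →₀ ℕ) g = 0 := by
        rw [coeff_zero_eq_constantCoeff_apply]; exact hg
      simp only [h0, mul_zero]
    · have hdeg : degN p1 + degN p2 = degN N := by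
        have := degN_add p1 p2
        rw [hp] at this
        omega
      have h1 : 1 ≤ degN p2 := by
        rcases Nat.eq_zero_or_pos (degN p2) with h0 | h0
        · exact absurd ((degN_eq_zero_iff p2).1 h0) h2
        · exact h0
      have hlt : degN p1 < k := by omega
      simp only [ih p1 hlt, zero_mul]

lemma cpow_coeff {f : MvPowerSeries σ ℂ} (hf : constantCoeff f = 1) (α : ℂ)
    (N : σ →₀ ℕ) {K : ℕ} (hK : degN N ≤ K) :
    coeff N (cpow f α) = ∑ k ∈ Finset.range (K + 1), binomC α k * coeff N ((f - 1) ^ k) := by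
  have hsub : constantCoeff (f - 1) = 0 := by
    rw [map_sub, hf, map_one, sub_self]
  rw [coeff_apply']
  show (∑ k ∈ Finset.range (degN N + 1), binomC α k * coeff N ((f - 1) ^ k)) = _
  apply Finset.sum_subset
  · intro k hk
    rw [Finset.mem_range] at hk ⊢
    omega
  · intro k _ hk
    rw [Finset.mem_range] at hk
    have : degN N < k := by omega
    rw [coeff_pow_eq_zero hsub k N this, mul_zero]

lemma cpow_mul_cpow {f : MvPowerSeries σ ℂ} (hf : constantCoeff f = 1) (α β : ℂ) :
    cpow f α * cpow f β = cpow f (α + β) := by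
  have hsub : constantCoeff (f - 1) = 0 := by
    rw [map_sub, hf, map_one, sub_self]
  apply MvPowerSeries.ext
  intro N
  set n := degN N with hn
  set c : ℕ → ℂ := fun k => coeff N ((f - 1) ^ k) with hc
  have hczero : ∀ k, n < k → c k = 0 := fun k hk => coeff_pow_eq_zero hsub k N hk
  -- LHS
  have hL : coeff N (cpow f α * cpow f β)
      = ∑ k ∈ Finset.range (n+1), ∑ l ∈ Finset.range (n+1),
          binomC α k * binomC β l * coeff N ((f-1)^(k+l)) := by
    rw [coeff_mul]
    have step1 : ∀ p ∈ Finset.HasAntidiagonal.antidiagonal N,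
        coeff p.1 (cpow f α) * coeff p.2 (cpow f β)
        = ∑ k ∈ Finset.range (n+1), ∑ l ∈ Finset.range (n+1),
            binomC α k * binomC β l * (coeff p.1 ((f-1)^k) * coeff p.2 ((f-1)^l)) := by
      intro p hp
      rw [Finset.HasAntidiagonal.mem_antidiagonal] at hp
      have hd : degN p.1 + degN p.2 = n := by rw [← degN_add, hp]
      rw [cpow_coeff hf α p.1 (K := n) (by omega), cpow_coeff hf β p.2 (K := n) (by omega)]
      rw [Finset.sum_mul_sum]
      apply Finset.sum_congr rfl; intro k _
      apply Finset.sum_congr rfl; intro l _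
      ring
    rw [Finset.sum_congr rfl step1]
    rw [Finset.sum_comm]
    apply Finset.sum_congr rfl; intro k _
    rw [Finset.sum_comm]
    apply Finset.sum_congr rfl; intro l _
    rw [← Finset.mul_sum, ← coeff_mul, ← pow_add]
  -- RHS
  have hR : coeff N (cpow f (α + β))
      = ∑ m ∈ Finset.range (n+1), ∑ j ∈ Finset.range (m+1),
          binomC α j * binomC β (m - j) * c m := by
    rw [cpow_coeff hf (α+β) N (K := n) (le_refl n)]
    apply Finset.sum_congr rfl; intro m _
    rw [binomC_add, Finset.sum_mul]
  rw [hL, hR]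
  -- convert both to sums over the filtered product
  have hLHS : (∑ k ∈ Finset.range (n+1), ∑ l ∈ Finset.range (n+1),
      binomC α k * binomC β l * coeff N ((f-1)^(k+l)))
      = ∑ q ∈ (Finset.range (n+1) ×ˢ Finset.range (n+1)).filter (fun q => q.1 + q.2 ≤ n),
          binomC α q.1 * binomC β q.2 * c (q.1 + q.2) := by
    rw [← Finset.sum_product']
    symm
    apply Finset.sum_subset (Finset.filter_subset _ _)
    intro q hq hq2
    rw [Finset.mem_filter] at hq2
    have : n < q.1 + q.2 := by
      rcases Nat.lt_or_ge n (q.1 + q.2) with h | h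
      · exact h
      · exact absurd ⟨hq, h⟩ hq2
    rw [hczero _ this, mul_zero]
  have hRHS : (∑ m ∈ Finset.range (n+1), ∑ j ∈ Finset.range (m+1),
      binomC α j * binomC β (m - j) * c m)
      = ∑ q ∈ (Finset.range (n+1) ×ˢ Finset.range (n+1)).filter (fun q => q.1 + q.2 ≤ n),
          binomC α q.1 * binomC β q.2 * c (q.1 + q.2) := by
    rw [Finset.sum_sigma']
    apply Finset.sum_nbij' (i := fun x => (x.2, x.1 - x.2)) (j := fun q => ⟨q.1 + q.2, q.1⟩)
    · rintro ⟨m, j⟩ hx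
      simp only [Finset.mem_sigma, Finset.mem_range] at hx
      simp only [Finset.mem_filter, Finset.mem_product, Finset.mem_range]
      omega
    · rintro ⟨k, l⟩ hq
      simp only [Finset.mem_filter, Finset.mem_product, Finset.mem_range] at hq
      simp only [Finset.mem_sigma, Finset.mem_range]
      omega
    · rintro ⟨m, j⟩ hx
      simp only [Finset.mem_sigma, Finset.mem_range] at hx
      dsimp only
      have h1 : j + (m - j) = m := by omega
      rw [h1]
    · rintro ⟨k, l⟩ hq
      simp
    · rintro ⟨m, j⟩ hx
      simp only [Finset.mem_sigma, Finset.mem_range] at hx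
      dsimp only
      have h1 : j + (m - j) = m := by omega
      rw [h1]
  rw [hLHS, hRHS]

lemma cpow_zero_exp {f : MvPowerSeries σ ℂ} (hf : constantCoeff f = 1) :
    cpow f 0 = 1 := by
  apply MvPowerSeries.ext
  intro N
  rw [coeff_apply']
  show (∑ k ∈ Finset.range (degN N + 1), binomC 0 k * coeff N ((f - 1) ^ k)) = _
  rw [Finset.sum_eq_single 0]
  · simp [binomC]
  · intro k _ hk
    have h0 : binomC 0 k = 0 := by
      obtain ⟨k', rfl⟩ := Nat.exists_eq_succ_of_ne_zero hk
      unfold binomC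
      rw [Finset.prod_eq_zero (Finset.mem_range.2 (Nat.succ_pos k'))]
      · simp
      · simp
    rw [h0, zero_mul]
  · intro h
    exact absurd (Finset.mem_range.2 (by omega)) h

lemma constantCoeff_cpow (f : MvPowerSeries σ ℂ) (α : ℂ) :
    constantCoeff (cpow f α) = 1 := by
  rw [← coeff_zero_eq_constantCoeff_apply, coeff_apply']
  show (∑ k ∈ Finset.range (degN (0 : σ →₀ ℕ) + 1), binomC α k * coeff 0 ((f - 1) ^ k)) = 1
  have : degN (0 : σ →₀ ℕ) = 0 := rfl
  rw [this]
  simp [binomC]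

lemma coeff_X_mul' (i : σ) (f : MvPowerSeries σ ℂ) (N : σ →₀ ℕ) :
    coeff N (X i * f) = if N i = 0 then 0 else coeff (N - Finsupp.single i 1) f := by
  have hX : (X i : MvPowerSeries σ ℂ) = monomial (Finsupp.single i 1) 1 := rfl
  rw [hX, coeff_monomial_mul]
  by_cases h : N i = 0
  · rw [if_neg, if_pos h]
    rw [Finsupp.single_le_iff]
    omega
  · rw [if_pos, if_neg h, one_mul]
    rw [Finsupp.single_le_iff]
    omega

end PS

section PolyMap

variable {H : Type*} [Fintype H]

/-- `f : ℂ^H → ℂ` is a polynomial map. -/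
def IsPolyMap (f : (H → ℂ) → ℂ) : Prop :=
  ∃ p : MvPolynomial H ℂ, ∀ ν : H → ℂ, f ν = MvPolynomial.aeval ν p

lemma IsPolyMap.const (c : ℂ) : IsPolyMap (fun _ : H → ℂ => c) :=
  ⟨MvPolynomial.C c, fun ν => by simp⟩

lemma IsPolyMap.coord (i : H) : IsPolyMap (fun ν : H → ℂ => ν i) :=
  ⟨MvPolynomial.X i, fun ν => by simp⟩

lemma IsPolyMap.add {f g : (H → ℂ) → ℂ} (hf : IsPolyMap f) (hg : IsPolyMap g) :
    IsPolyMap (fun ν => f ν + g ν) := by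
  obtain ⟨p, hp⟩ := hf; obtain ⟨q, hq⟩ := hg
  exact ⟨p + q, fun ν => by simp [hp, hq]⟩

lemma IsPolyMap.mul {f g : (H → ℂ) → ℂ} (hf : IsPolyMap f) (hg : IsPolyMap g) :
    IsPolyMap (fun ν => f ν * g ν) := by
  obtain ⟨p, hp⟩ := hf; obtain ⟨q, hq⟩ := hg
  exact ⟨p * q, fun ν => by simp [hp, hq]⟩

lemma IsPolyMap.neg {f : (H → ℂ) → ℂ} (hf : IsPolyMap f) : IsPolyMap (fun ν => -f ν) := by
  obtain ⟨p, hp⟩ := hf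
  exact ⟨-p, fun ν => by simp [hp]⟩

lemma IsPolyMap.sub {f g : (H → ℂ) → ℂ} (hf : IsPolyMap f) (hg : IsPolyMap g) :
    IsPolyMap (fun ν => f ν - g ν) := by
  obtain ⟨p, hp⟩ := hf; obtain ⟨q, hq⟩ := hg
  exact ⟨p - q, fun ν => by simp [hp, hq]⟩

lemma IsPolyMap.sum {ι : Type*} (s : Finset ι) (f : ι → (H → ℂ) → ℂ)
    (hf : ∀ i ∈ s, IsPolyMap (f i)) : IsPolyMap (fun ν => ∑ i ∈ s, f i ν) := by
  classical
  induction s using Finset.induction_on with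
  | empty => simpa using IsPolyMap.const 0
  | insert a s' ha ih =>
    simp only [Finset.sum_insert ha]
    exact (hf a (Finset.mem_insert_self a s')).add
      (ih (fun i hi => hf i (Finset.mem_insert_of_mem hi)))

lemma IsPolyMap.prod {ι : Type*} (s : Finset ι) (f : ι → (H → ℂ) → ℂ)
    (hf : ∀ i ∈ s, IsPolyMap (f i)) : IsPolyMap (fun ν => ∏ i ∈ s, f i ν) := by
  classical
  induction s using Finset.induction_on with
  | empty => simpa using IsPolyMap.const 1
  | insert a s' ha ih =>
    simp only [Finset.prod_insert ha]
    exact (hf a (Finset.mem_insert_self a s')).mul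
      (ih (fun i hi => hf i (Finset.mem_insert_of_mem hi)))

lemma IsPolyMap.congr {f g : (H → ℂ) → ℂ} (h : ∀ ν, f ν = g ν) (hg : IsPolyMap g) :
    IsPolyMap f := by
  obtain ⟨p, hp⟩ := hg
  exact ⟨p, fun ν => (h ν).trans (hp ν)⟩

lemma IsPolyMap.binomC {f : (H → ℂ) → ℂ} (hf : IsPolyMap f) (k : ℕ) :
    IsPolyMap (fun ν => binomC (f ν) k) := by
  have h1 : IsPolyMap (fun ν => ∏ j ∈ Finset.range k, (f ν - (j : ℂ))) :=
    IsPolyMap.prod _ _ (fun j _ => hf.sub (IsPolyMap.const _))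
  exact IsPolyMap.congr (fun ν => by rw [_root_.binomC, div_eq_mul_inv])
    (h1.mul (IsPolyMap.const (((Nat.factorial k : ℕ) : ℂ)⁻¹)))

lemma IsPolyMap.det {ι : Type*} [Fintype ι] [DecidableEq ι]
    (M : (H → ℂ) → Matrix ι ι ℂ) (h : ∀ a b, IsPolyMap (fun ν => M ν a b)) :
    IsPolyMap (fun ν => (M ν).det) := by
  have : ∀ ν, (M ν).det = ∑ σ : Equiv.Perm ι,
      ((Equiv.Perm.sign σ : ℤ) : ℂ) * ∏ i, M ν (σ i) i := by
    intro ν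
    rw [Matrix.det_apply']
  exact IsPolyMap.congr this
    (IsPolyMap.sum _ _ (fun σ _ =>
      (IsPolyMap.const _).mul (IsPolyMap.prod _ _ (fun i _ => h (σ i) i))))

lemma IsPolyMap.shift {f : (H → ℂ) → ℂ} (hf : IsPolyMap f) (c : H → ℂ) :
    IsPolyMap (fun ν => f (fun j => ν j + c j)) := by
  obtain ⟨p, hp⟩ := hf
  refine ⟨MvPolynomial.aeval (fun i => MvPolynomial.X i + MvPolynomial.C (c i)) p, fun ν => ?_⟩
  show f (fun j => ν j + c j) = _
  rw [hp]
  have := MvPolynomial.comp_aeval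
    (φ := MvPolynomial.aeval ν (R := ℂ) (S₁ := ℂ))
    (f := fun i : H => (MvPolynomial.X i + MvPolynomial.C (c i) : MvPolynomial H ℂ))
  have h2 := DFunLike.congr_fun this p
  simp only [AlgHom.coe_comp, Function.comp_apply] at h2
  have h3 : (fun i => MvPolynomial.aeval ν
      ((MvPolynomial.X i + MvPolynomial.C (c i) : MvPolynomial H ℂ))) = fun j => ν j + c j := by
    funext i
    simp
  rw [h2, h3]

/-- restriction of a polynomial map to a line is a univariate polynomial function -/
lemma IsPolyMap.line {f : (H → ℂ) → ℂ} (hf : IsPolyMap f) (x w : H → ℂ) :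
    ∃ q : Polynomial ℂ, ∀ t : ℂ, f (x + t • w) = q.eval t := by
  obtain ⟨p, hp⟩ := hf
  refine ⟨MvPolynomial.aeval
    (fun i => Polynomial.C (x i) + Polynomial.C (w i) * Polynomial.X) p, fun t => ?_⟩
  show f (x + t • w) = _
  rw [hp]
  have := MvPolynomial.comp_aeval
    (φ := Polynomial.aeval t (R := ℂ) (A := ℂ))
    (f := fun i : H => (Polynomial.C (x i) + Polynomial.C (w i) * Polynomial.X : Polynomial ℂ))
  have h2 := DFunLike.congr_fun this p
  simp only [AlgHom.coe_comp, Function.comp_apply] at h2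
  have h3 : (fun i => Polynomial.aeval t
      ((Polynomial.C (x i) + Polynomial.C (w i) * Polynomial.X : Polynomial ℂ))) = x + t • w := by
    funext i
    simp [Pi.add_apply, Pi.smul_apply]
    ring
  rw [← Polynomial.coe_aeval_eq_eval, h2, h3]

lemma IsPolyMap.periodic_line {f : (H → ℂ) → ℂ} (hf : IsPolyMap f) (w : H → ℂ)
    (hper : ∀ y, f (y + w) = f y) : ∀ (x : H → ℂ) (t : ℂ), f (x + t • w) = f x := by
  intro x t
  obtain ⟨q, hq⟩ := hf.line x w
  have hstep : ∀ s : ℂ, q.eval (s + 1) = q.eval s := by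
    intro s
    rw [← hq, ← hq]
    have : x + (s + 1) • w = (x + s • w) + w := by
      rw [add_smul, one_smul, add_assoc]
    rw [this, hper]
  have hnat : ∀ n : ℕ, q.eval ((n : ℂ)) = q.eval 0 := by
    intro n
    induction n with
    | zero => simp
    | succ n ih =>
      have : ((n + 1 : ℕ) : ℂ) = (n : ℂ) + 1 := by push_cast; ring
      rw [this, hstep, ih]
  have hq0 : q = Polynomial.C (q.eval 0) := by
    apply Polynomial.eq_of_infinite_eval_eq
    apply Set.Infinite.mono (s := Set.range (fun n : ℕ => (n : ℂ)))
    · rintro y ⟨n, rfl⟩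
      simp only [Set.mem_setOf_eq, Polynomial.eval_C]
      exact hnat n
    · exact Set.infinite_range_of_injective (fun a b hab => by exact_mod_cast hab)
  have h0 : q.eval 0 = f x := by
    rw [← hq 0]
    simp
  rw [hq t, hq0]
  simpa using h0

lemma IsPolyMap.const_of_periodic {f : (H → ℂ) → ℂ} (hf : IsPolyMap f) (v : H → (H → ℂ))
    (hspan : ∀ ν : H → ℂ, ∃ t : H → ℂ, ν = ∑ i, t i • v i)
    (hper : ∀ (i : H) (y : H → ℂ), f (y + v i) = f y) :
    ∀ ν, f ν = f 0 := by
  intro ν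
  obtain ⟨t, rfl⟩ := hspan ν
  have key : ∀ s : Finset H, f (∑ i ∈ s, t i • v i) = f 0 := by
    intro s
    classical
    induction s using Finset.induction_on with
    | empty => simp
    | insert a s' ha ih =>
      rw [Finset.sum_insert ha]
      have : t a • v a + ∑ i ∈ s', t i • v i = (∑ i ∈ s', t i • v i) + t a • v a := by
        rw [add_comm]
      rw [this, hf.periodic_line (v a) (hper a) _ (t a), ih]
  exact key Finset.univ

end PolyMap

section Rside

variable {H : Type*} [Fintype H] [DecidableEq H]

lemma natC_ne_zero (l : ℕ) : ((l : ℂ) + 1) ≠ 0 := Nat.cast_add_one_ne_zero l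

lemma natC_ne_zero2 (l : ℕ) : ((l : ℂ) + 2) ≠ 0 := by
  intro h
  apply Nat.cast_add_one_ne_zero (R := ℂ) (l + 1)
  push_cast
  linear_combination h

/-- The scalar core of the R-recurrence, case `N i = l + 2`. -/
lemma core_scalar (d1 d2 x : ℂ) (l : ℕ) :
    (x * d1 + ((l : ℂ) + 2) * d2 - d1) * ((1 / ((l : ℂ) + 2)) * binomC (x + (l : ℂ)) (l + 1))
    = (x * d1 + ((l : ℂ) + 2) * d2) * ((1 / ((l : ℂ) + 2)) * binomC (x + (l : ℂ) + 1) (l + 1))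
      - (x * d1 + ((l : ℂ) + 2) * d2 - d2) * ((1 / ((l : ℂ) + 1)) * binomC (x + (l : ℂ)) l) := by
  have habs := binomC_absorb (x + (l : ℂ)) l
  have hpas := binomC_pascal (x + (l : ℂ) + 1) l
  have e1 : x + (l : ℂ) + 1 - 1 = x + l := by ring
  rw [e1] at hpas
  rw [hpas]
  have hsim : (x + (l : ℂ) - (l : ℂ)) = x := by ring
  rw [hsim] at habs
  set A := binomC (x + (l : ℂ)) (l + 1) with hA
  set B := binomC (x + (l : ℂ)) l with hB
  have hn := natC_ne_zero2 l
  have hl := natC_ne_zero l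
  field_simp
  linear_combination (-d1) * habs

/-- determinants over equal supports agree -/
lemma det_support_congr {S1 S2 : Finset H} (h : S1 = S2) (f g : H → H → ℂ)
    (hfg : ∀ a ∈ S2, ∀ b ∈ S2, f a b = g a b) :
    (Matrix.of fun a b : ↥S1 => f (a : H) (b : H)).det
      = (Matrix.of fun a b : ↥S2 => g (a : H) (b : H)).det := by
  subst h
  congr 1
  ext a b
  exact hfg a a.2 b b.2

def epsEquiv (S : Finset H) (i : H) (hi : i ∈ S) : ↥(S.erase i) ⊕ Unit ≃ ↥S where
  toFun := Sum.elim (fun a => ⟨(a : H), Finset.mem_of_mem_erase a.2⟩) (fun _ => ⟨i, hi⟩)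
  invFun := fun b => if h : (b : H) = i then Sum.inr () else
    Sum.inl ⟨(b : H), Finset.mem_erase.2 ⟨h, b.2⟩⟩
  left_inv := by
    rintro (a | u)
    · simp only [Sum.elim_inl]
      exact dif_neg (Finset.ne_of_mem_erase a.2)
    · simp only [Sum.elim_inr]
      simp
  right_inv := by
    intro b
    by_cases h : (b : H) = i
    · simp only [dif_pos h, Sum.elim_inr]
      exact Subtype.ext h.symm
    · simp only [dif_neg h, Sum.elim_inl]

/-- expanding the determinant along the column of a basis vector gives the minor -/
lemma det_minor {S : Finset H} (i : H) (hi : i ∈ S) (f : H → H → ℂ) :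
    (Matrix.updateCol (Matrix.of fun a b : ↥S => f (a : H) (b : H)) ⟨i, hi⟩
      (fun a => if a = ⟨i, hi⟩ then 1 else 0)).det
    = (Matrix.of fun a b : ↥(S.erase i) => f (a : H) (b : H)).det := by
  classical
  set i' : ↥S := ⟨i, hi⟩ with hi'
  set M := Matrix.updateCol (Matrix.of fun a b : ↥S => f (a : H) (b : H)) i'
    (fun a => if a = i' then 1 else 0) with hM
  have hne : ∀ a : ↥(S.erase i), ((⟨(a : H), Finset.mem_of_mem_erase a.2⟩ : ↥S) ≠ i') := by
    intro a h
    have := congrArg Subtype.val h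
    exact (Finset.ne_of_mem_erase a.2) this
  set ε := epsEquiv S i hi with hε
  rw [← Matrix.det_submatrix_equiv_self ε M]
  have hεl : ∀ a : ↥(S.erase i), ε (Sum.inl a) = ⟨(a : H), Finset.mem_of_mem_erase a.2⟩ := by
    intro a; rw [hε]; rfl
  have hεr : ε (Sum.inr ()) = i' := by rw [hε]; rfl
  have hblock : M.submatrix ε ε
      = Matrix.fromBlocks (Matrix.of fun a b : ↥(S.erase i) => f (a : H) (b : H)) 0
          (Matrix.of fun (_ : Unit) (b : ↥(S.erase i)) => f i (b : H)) 1 := by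
    ext a b
    rcases a with a | a <;> rcases b with b | b
    · show M (ε (Sum.inl a)) (ε (Sum.inl b)) = f (a : H) (b : H)
      rw [hεl, hεl, hM, Matrix.updateCol_apply, if_neg (hne b)]
      rfl
    · show M (ε (Sum.inl a)) (ε (Sum.inr b)) = 0
      rw [hεl, hεr, hM, Matrix.updateCol_apply, if_pos rfl, if_neg (hne a)]
    · show M (ε (Sum.inr a)) (ε (Sum.inl b)) = f i (b : H)
      rw [hεl, hεr, hM, Matrix.updateCol_apply, if_neg (hne b)]
      rfl
    · show M (ε (Sum.inr a)) (ε (Sum.inr b)) = (1 : Matrix Unit Unit ℂ) a b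
      rw [hεr, hM, Matrix.updateCol_apply, if_pos rfl, if_pos rfl]
      simp [Matrix.one_apply]
  rw [hblock, Matrix.det_fromBlocks_zero₁₂, Matrix.det_one, mul_one]

end Rside

section Rmain

variable {H : Type*} [Fintype H] [DecidableEq H] (D G : Matrix H H ℂ)

lemma Pfin_shift_D (hD : D.det ≠ 0) (ν : H → ℂ) (N : H →₀ ℕ) (i l : H) :
    Pfin D G (fun j => ν j + D i j) N l = Pfin D G ν N l - (if i = l then 1 else 0) := by
  unfold Pfin
  have h1 : ∑ j, (ν j + D i j) * D⁻¹ j l = (∑ j, ν j * D⁻¹ j l) + ∑ j, D i j * D⁻¹ j l := by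
    rw [← Finset.sum_add_distrib]
    exact Finset.sum_congr rfl (fun j _ => by ring)
  have h2 : ∑ j, D i j * D⁻¹ j l = (if i = l then 1 else 0) := by
    have h := Matrix.mul_nonsing_inv D (isUnit_iff_ne_zero.mpr hD)
    have h3 := congrFun (congrFun h i) l
    rw [Matrix.mul_apply] at h3
    rw [h3, Matrix.one_apply]
  rw [h1, h2]
  ring

lemma Pfin_shift_G (ν : H → ℂ) (N : H →₀ ℕ) (i : H) (hNi : N i ≠ 0) (l : H) :
    Pfin D G (fun j => ν j + G i j) (N - Finsupp.single i 1) l = Pfin D G ν N l := by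
  set N' : H →₀ ℕ := N - Finsupp.single i 1 with hN'
  unfold Pfin
  have h1 : ∑ j, (ν j + G i j) * D⁻¹ j l
      = (∑ j, ν j * D⁻¹ j l) + (G * D⁻¹) i l := by
    rw [Matrix.mul_apply, ← Finset.sum_add_distrib]
    exact Finset.sum_congr rfl (fun j _ => by ring)
  have h2 : ∀ j, ((N' j : ℕ) : ℂ)
      = (N j : ℂ) - (if i = j then 1 else 0) := by
    intro j
    rw [hN', Finsupp.tsub_apply, Finsupp.single_apply]
    by_cases h : i = j
    · subst h
      rw [if_pos rfl, if_pos rfl]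
      have h1' : 1 ≤ N i := Nat.one_le_iff_ne_zero.2 hNi
      rw [Nat.cast_sub h1']
      simp
    · rw [if_neg h, if_neg h]
      simp
  have h3 : ∑ j, ((N' j : ℕ) : ℂ) * (G * D⁻¹) j l
      = (∑ j, (N j : ℂ) * (G * D⁻¹) j l) - (G * D⁻¹) i l := by
    calc ∑ j, ((N' j : ℕ) : ℂ) * (G * D⁻¹) j l
        = ∑ j, ((N j : ℂ) * (G * D⁻¹) j l
            - (if i = j then (G * D⁻¹) j l else 0)) := by
          apply Finset.sum_congr rfl
          intro j _
          rw [h2 j]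
          by_cases h : i = j <;> simp [h] <;> ring
      _ = (∑ j, (N j : ℂ) * (G * D⁻¹) j l) - ∑ j, (if i = j then (G * D⁻¹) j l else 0) := by
          rw [Finset.sum_sub_distrib]
      _ = (∑ j, (N j : ℂ) * (G * D⁻¹) j l) - (G * D⁻¹) i l := by
          rw [Finset.sum_ite_eq Finset.univ i (fun j => (G * D⁻¹) j l), if_pos (Finset.mem_univ i)]
  rw [h1, h3]
  ring

lemma R_coeff_apply (ν : H → ℂ) (N : H →₀ ℕ) : MvPowerSeries.coeff N (Rfin D G ν)
    = (Matrix.det (Matrix.of fun a b : N.support => Ffin D G ν N a b)) *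
      ∏ j ∈ N.support, (1 / (N j : ℂ)) * binomC (Pfin D G ν N j + (N j : ℂ) - 1) (N j - 1) := rfl

lemma R_coeff_nu_zero (N : H →₀ ℕ) (hN : N ≠ 0) :
    MvPowerSeries.coeff N (Rfin D G 0) = 0 := by
  rw [R_coeff_apply]
  suffices hdet : (Matrix.det (Matrix.of fun a b : N.support => Ffin D G 0 N a b)) = 0 by
    rw [hdet, zero_mul]
  apply Matrix.exists_vecMul_eq_zero_iff.mp
  refine ⟨fun a : ↥(N.support) => ((N (a : H) : ℕ) : ℂ), ?_, ?_⟩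
  · obtain ⟨a, ha⟩ := Finsupp.support_nonempty_iff.2 hN
    intro h
    have := congrFun h ⟨a, ha⟩
    simp only [Pi.zero_apply, Nat.cast_eq_zero] at this
    exact Finsupp.mem_support_iff.1 ha this
  · funext b
    have hvm : (Matrix.vecMul (fun a : ↥(N.support) => ((N (a : H) : ℕ) : ℂ))
        (Matrix.of fun a b : N.support => Ffin D G 0 N a b)) b
        = ∑ a : ↥(N.support), ((N (a : H) : ℕ) : ℂ) * Ffin D G 0 N (a : H) (b : H) := by
      simp [Matrix.vecMul, dotProduct]
    rw [hvm]
    have hP0 : Pfin D G 0 N (b : H) = - ∑ j, (N j : ℂ) * (G * D⁻¹) j (b : H) := by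
      unfold Pfin
      simp
    have hsum : ∑ a : ↥(N.support), ((N (a : H) : ℕ) : ℂ) * (G * D⁻¹) (a : H) (b : H)
        = ∑ j, (N j : ℂ) * (G * D⁻¹) j (b : H) := by
      rw [Finset.sum_coe_sort N.support (fun j => (N j : ℂ) * (G * D⁻¹) j (b : H))]
      apply Finset.sum_subset (Finset.subset_univ _)
      intro j _ hj
      rw [Finsupp.notMem_support_iff] at hj
      rw [hj]
      simp
    have hexp : ∀ a : ↥(N.support), ((N (a : H) : ℕ) : ℂ) * Ffin D G 0 N (a : H) (b : H)
        = (if a = b then (N (a:H) : ℂ) * Pfin D G 0 N (b:H) else 0)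
          + ((N (a:H) : ℂ) * (G * D⁻¹) (a:H) (b:H)) * (N (b:H) : ℂ) := by
      intro a
      unfold Ffin
      by_cases hab : a = b
      · rw [if_pos hab, if_pos (by rw [hab])]
        ring
      · rw [if_neg hab, if_neg (fun h => hab (Subtype.ext h))]
        ring
    rw [Finset.sum_congr rfl (fun a _ => hexp a), Finset.sum_add_distrib]
    rw [Finset.sum_ite_eq' Finset.univ (b : ↥(N.support))
      (fun a => (N (a:H) : ℂ) * Pfin D G 0 N (b:H)), if_pos (Finset.mem_univ _)]
    rw [← Finset.sum_mul, hsum, hP0]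
    simp only [Pi.zero_apply]
    ring

lemma R_coeff_polymap (N : H →₀ ℕ) :
    IsPolyMap (fun ν => MvPowerSeries.coeff N (Rfin D G ν)) := by
  have hP : ∀ l, IsPolyMap (fun ν : H → ℂ => Pfin D G ν N l) := by
    intro l
    unfold Pfin
    exact ((IsPolyMap.sum Finset.univ _
      (fun j _ => (IsPolyMap.coord j).mul (IsPolyMap.const (D⁻¹ j l)))).neg).sub
      (IsPolyMap.const _)
  apply IsPolyMap.mul
  · apply IsPolyMap.det (M := fun ν => Matrix.of fun a b : ↥(N.support) => Ffin D G ν N a b)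
    intro a b
    unfold Ffin
    apply IsPolyMap.add
    · by_cases hab : (a : H) = (b : H)
      · simp only [hab, if_true]
        exact hP (b : H)
      · simp only [hab, if_false]
        exact IsPolyMap.const 0
    · exact IsPolyMap.const _
  · apply IsPolyMap.prod
    intro j _
    exact (IsPolyMap.const _).mul
      ((((hP j).add (IsPolyMap.const _)).sub (IsPolyMap.const 1)).binomC (N j - 1))

lemma R_coeff_zero_N (ν : H → ℂ) : MvPowerSeries.coeff (0 : H →₀ ℕ) (Rfin D G ν) = 1 := by
  rw [R_coeff_apply]
  haveI : IsEmpty ↥((0 : H →₀ ℕ).support) := ⟨fun a => absurd a.2 (Finsupp.notMem_support_iff.2 rfl)⟩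
  rw [Matrix.det_isEmpty, one_mul]
  rw [show (0 : H →₀ ℕ).support = ∅ from Finsupp.support_zero, Finset.prod_empty]

end Rmain
section Rrec

variable {H : Type*} [Fintype H] [DecidableEq H] (D G : Matrix H H ℂ)

lemma R_recurrence (hD : D.det ≠ 0) (ν : H → ℂ) (N : H →₀ ℕ) (i : H) :
    MvPowerSeries.coeff N (Rfin D G (fun j => ν j + D i j))
    = MvPowerSeries.coeff N (Rfin D G ν)
      - (if N i = 0 then 0 else
          MvPowerSeries.coeff (N - Finsupp.single i 1) (Rfin D G (fun j => ν j + G i j))) := by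
  classical
  by_cases hNi : N i = 0
  · rw [if_pos hNi, sub_zero, R_coeff_apply, R_coeff_apply]
    have hP : ∀ b, b ∈ N.support → Pfin D G (fun j => ν j + D i j) N b = Pfin D G ν N b := by
      intro b hb
      rw [Pfin_shift_D D G hD, if_neg, sub_zero]
      intro he
      rw [← he] at hb
      exact (Finsupp.mem_support_iff.1 hb) hNi
    congr 1
    · congr 1
      ext a b
      show Ffin D G (fun j => ν j + D i j) N ↑a ↑b = Ffin D G ν N ↑a ↑b
      unfold Ffin
      rw [hP ↑b b.2]
    · exact Finset.prod_congr rfl (fun j hj => by rw [hP j hj])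
  · rw [if_neg hNi, R_coeff_apply, R_coeff_apply, R_coeff_apply]
    have hNi1 : 1 ≤ N i := Nat.one_le_iff_ne_zero.2 hNi
    set N' : H →₀ ℕ := N - Finsupp.single i 1 with hN'def
    set S := N.support with hS
    have hiS : i ∈ S := Finsupp.mem_support_iff.2 hNi
    set i' : ↥S := ⟨i, hiS⟩ with hi'def
    set P : H → ℂ := Pfin D G ν N with hPdef
    set F : Matrix ↥S ↥S ℂ := Matrix.of (fun a b : ↥S => Ffin D G ν N ↑a ↑b) with hFdef
    set ecol : ↥S → ℂ := fun a => if a = i' then 1 else 0 with hecol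
    set gcol : ↥S → ℂ := fun a => (G * D⁻¹) (↑a : H) i with hgcol
    set d1 : ℂ := (F.updateCol i' ecol).det with hd1
    set d2 : ℂ := (F.updateCol i' gcol).det with hd2
    have hN'app : ∀ j, N' j = N j - (if i = j then 1 else 0) := by
      intro j
      rw [hN'def, Finsupp.tsub_apply, Finsupp.single_apply]
    have hN'i : N' i = N i - 1 := by rw [hN'app, if_pos rfl]
    have hN'ne : ∀ j : H, j ≠ i → N' j = N j := by
      intro j hj
      rw [hN'app, if_neg (fun h => hj h.symm), Nat.sub_zero]
    have hPD : ∀ l, Pfin D G (fun j => ν j + D i j) N l = P l - (if i = l then 1 else 0) :=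
      fun l => Pfin_shift_D D G hD ν N i l
    have hPG : ∀ l, Pfin D G (fun j => ν j + G i j) N' l = P l :=
      fun l => Pfin_shift_G D G ν N i hNi l
    -- determinant decomposition of F
    have hdetF : F.det = P i * d1 + ((N i : ℕ) : ℂ) * d2 := by
      have hcol : F = F.updateCol i' (P i • ecol + ((N i : ℕ) : ℂ) • gcol) := by
        ext a b
        rw [Matrix.updateCol_apply]
        by_cases hb : b = i'
        · rw [if_pos hb, hb]
          show Ffin D G ν N ↑a i = _
          unfold Ffin
          simp only [Pi.add_apply, Pi.smul_apply, smul_eq_mul, hecol, hgcol]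
          by_cases ha : (a : H) = i
          · rw [if_pos ha, if_pos (Subtype.ext ha : a = i')]
            ring
          · rw [if_neg ha, if_neg (fun h : a = i' => ha (by rw [h]))]
            ring
        · rw [if_neg hb]
      conv_lhs => rw [hcol]
      rw [Matrix.det_updateCol_add, Matrix.det_updateCol_smul,
        Matrix.det_updateCol_smul, ← hd1, ← hd2]
    -- determinant of the D-shifted matrix
    have hdetD : (Matrix.of (fun a b : ↥S => Ffin D G (fun j => ν j + D i j) N ↑a ↑b)).det
        = F.det - d1 := by
      have hcol : (Matrix.of (fun a b : ↥S => Ffin D G (fun j => ν j + D i j) N ↑a ↑b))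
          = F.updateCol i' ((P i - 1) • ecol + ((N i : ℕ) : ℂ) • gcol) := by
        ext a b
        rw [Matrix.updateCol_apply]
        by_cases hb : b = i'
        · rw [if_pos hb]
          have hbi : (b : H) = i := by rw [hb]
          show Ffin D G (fun j => ν j + D i j) N ↑a ↑b = _
          unfold Ffin
          rw [hPD ↑b, hbi, if_pos (rfl : i = i)]
          simp only [Pi.add_apply, Pi.smul_apply, smul_eq_mul, hecol, hgcol]
          by_cases ha : (a : H) = i
          · rw [if_pos ha, if_pos (Subtype.ext ha : a = i')]
            ring
          · rw [if_neg ha, if_neg (fun h : a = i' => ha (by rw [h]))]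
            ring
        · rw [if_neg hb]
          have hbi : (b : H) ≠ i := fun h => hb (Subtype.ext h)
          show Ffin D G (fun j => ν j + D i j) N ↑a ↑b = Ffin D G ν N ↑a ↑b
          unfold Ffin
          rw [hPD ↑b, if_neg (show ¬ i = (b : H) from fun h => hbi h.symm), sub_zero]
      rw [hcol, Matrix.det_updateCol_add, Matrix.det_updateCol_smul,
        Matrix.det_updateCol_smul, ← hd1, ← hd2, hdetF]
      ring
    -- product bookkeeping
    set Pi0 : ℂ := ∏ j ∈ S.erase i,
      (1 / (N j : ℂ)) * binomC (P j + (N j : ℂ) - 1) (N j - 1) with hPi0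
    have hprodnu : ∏ j ∈ S, (1 / (N j : ℂ)) * binomC (P j + (N j : ℂ) - 1) (N j - 1)
        = ((1 / (N i : ℂ)) * binomC (P i + (N i : ℂ) - 1) (N i - 1)) * Pi0 :=
      (Finset.mul_prod_erase S _ hiS).symm
    have hprodD : (∏ j ∈ S, (1 / (N j : ℂ)) *
          binomC (Pfin D G (fun j => ν j + D i j) N j + (N j : ℂ) - 1) (N j - 1))
        = ((1 / (N i : ℂ)) * binomC (P i - 1 + (N i : ℂ) - 1) (N i - 1)) * Pi0 := by
      rw [← Finset.mul_prod_erase S _ hiS]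
      congr 1
      · rw [hPD i, if_pos rfl]
      · apply Finset.prod_congr rfl
        intro j hj
        rw [hPD j, if_neg (fun h => (Finset.ne_of_mem_erase hj) h.symm), sub_zero]
    obtain ⟨m, hm⟩ : ∃ m, N i = m + 1 := ⟨N i - 1, by omega⟩
    rcases m with _ | l
    · -- case N i = 1
      have hsupp : N'.support = S.erase i := by
        ext j
        rw [Finsupp.mem_support_iff, Finset.mem_erase, hS, Finsupp.mem_support_iff]
        by_cases hj : j = i
        · subst hj
          rw [hN'i, hm]
          simp
        · rw [hN'ne j hj]
          simp [hj]
      have hdet2 : (Matrix.of (fun a b : ↥(N'.support) =>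
          Ffin D G (fun j => ν j + G i j) N' ↑a ↑b)).det = d1 := by
        rw [det_support_congr hsupp (fun a b => Ffin D G (fun j => ν j + G i j) N' a b)
          (fun a b => Ffin D G ν N a b) ?_]
        · rw [hd1, hFdef, hi'def, hecol]
          exact (det_minor i hiS (fun a b => Ffin D G ν N a b)).symm
        · intro a ha b hb
          have hbne : b ≠ i := (Finset.mem_erase.1 hb).1
          show Ffin D G (fun j => ν j + G i j) N' a b = Ffin D G ν N a b
          unfold Ffin
          rw [hPG b, hN'ne b hbne]
      have hprod2 : (∏ j ∈ N'.support, (1 / (N' j : ℂ)) *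
            binomC (Pfin D G (fun j => ν j + G i j) N' j + (N' j : ℂ) - 1) (N' j - 1)) = Pi0 := by
        rw [Finset.prod_congr hsupp (fun j hj => ?_)]
        have hjne : j ≠ i := (Finset.mem_erase.1 hj).1
        rw [hPG j, hN'ne j hjne]
      rw [hdetD, hdet2, hprodD, hprodnu, hprod2, hm]
      norm_num [binomC_zero]
      ring
    · -- case N i = l + 2
      have hm2 : N i = l + 2 := by omega
      have hN'il : N' i = l + 1 := by omega
      have hsupp : N'.support = S := by
        ext j
        rw [Finsupp.mem_support_iff, hS, Finsupp.mem_support_iff]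
        by_cases hj : j = i
        · subst hj
          rw [hN'il, hm2]
          simp
        · rw [hN'ne j hj]
      have hcast : ((N' i : ℕ) : ℂ) = ((N i : ℕ) : ℂ) - 1 := by
        rw [hN'il, hm2]
        push_cast
        ring
      have hdet2 : (Matrix.of (fun a b : ↥(N'.support) =>
          Ffin D G (fun j => ν j + G i j) N' ↑a ↑b)).det = F.det - d2 := by
        rw [det_support_congr hsupp (fun a b => Ffin D G (fun j => ν j + G i j) N' a b)
          (fun a b => Ffin D G (fun j => ν j + G i j) N' a b) (fun _ _ _ _ => rfl)]
        have hcol : (Matrix.of (fun a b : ↥S => Ffin D G (fun j => ν j + G i j) N' ↑a ↑b))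
            = F.updateCol i' (P i • ecol + (((N i : ℕ) : ℂ) - 1) • gcol) := by
          ext a b
          rw [Matrix.updateCol_apply]
          by_cases hb : b = i'
          · rw [if_pos hb]
            have hbi : (b : H) = i := by rw [hb]
            show Ffin D G (fun j => ν j + G i j) N' ↑a ↑b = _
            unfold Ffin
            rw [hPG ↑b]
            simp only [hbi, Pi.add_apply, Pi.smul_apply, smul_eq_mul, hecol, hgcol, hcast]
            by_cases ha : (a : H) = i
            · rw [if_pos ha, if_pos (Subtype.ext ha : a = i')]
              ring
            · rw [if_neg ha, if_neg (fun h : a = i' => ha (by rw [h]))]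
              ring
          · rw [if_neg hb]
            have hbi : (b : H) ≠ i := fun h => hb (Subtype.ext h)
            show Ffin D G (fun j => ν j + G i j) N' ↑a ↑b = Ffin D G ν N ↑a ↑b
            unfold Ffin
            rw [hPG ↑b, hN'ne ↑b hbi]
        rw [hcol, Matrix.det_updateCol_add, Matrix.det_updateCol_smul,
          Matrix.det_updateCol_smul, ← hd1, ← hd2, hdetF]
        ring
      have hprod2 : (∏ j ∈ N'.support, (1 / (N' j : ℂ)) *
            binomC (Pfin D G (fun j => ν j + G i j) N' j + (N' j : ℂ) - 1) (N' j - 1))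
          = ((1 / (N' i : ℂ)) * binomC (P i + (N' i : ℂ) - 1) (N' i - 1)) * Pi0 := by
        rw [Finset.prod_congr hsupp (fun j hj => rfl), ← Finset.mul_prod_erase S _ hiS]
        congr 1
        · rw [hPG i]
        · apply Finset.prod_congr rfl
          intro j hj
          have hjne : j ≠ i := (Finset.mem_erase.1 hj).1
          rw [hPG j, hN'ne j hjne]
      rw [hdetD, hdet2, hprodD, hprodnu, hprod2, hdetF]
      have hc1 : ((N i : ℕ) : ℂ) = (l : ℂ) + 2 := by rw [hm2]; push_cast; ring
      have hc2 : ((N' i : ℕ) : ℂ) = (l : ℂ) + 1 := by rw [hN'il]; push_cast; ring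
      have hidx1 : N i - 1 = l + 1 := by omega
      have hidx2 : N' i - 1 = l := by omega
      rw [hc1, hc2, hidx1, hidx2]
      have e1 : P i - 1 + ((l : ℂ) + 2) - 1 = P i + l := by ring
      have e2 : P i + ((l : ℂ) + 2) - 1 = P i + l + 1 := by ring
      have e3 : P i + ((l : ℂ) + 1) - 1 = P i + l := by ring
      rw [e1, e2, e3]
      linear_combination Pi0 * core_scalar d1 d2 (P i) l

end Rrec


section Deg

variable {σ : Type*} [DecidableEq σ]

lemma degN_sub_single (N : σ →₀ ℕ) (i : σ) (h : N i ≠ 0) :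
    degN (N - Finsupp.single i 1) + 1 = degN N := by
  have hle : Finsupp.single i 1 ≤ N := Finsupp.single_le_iff.2 (Nat.one_le_iff_ne_zero.2 h)
  have hadd : (N - Finsupp.single i 1) + Finsupp.single i 1 = N := tsub_add_cancel_of_le hle
  have hA := degN_add (N - Finsupp.single i 1) (Finsupp.single i 1)
  rw [hadd] at hA
  have hsing : degN (Finsupp.single i 1) = 1 := by
    show (Finsupp.single i 1).sum (fun _ e => e) = 1
    rw [Finsupp.sum_single_index]
    rfl
  omega

end Deg

/-- Let `(Q_i)` be the unique solution of the finite `Q`-system for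
matrices `D, G` with `det D ≠ 0`, and for `ν ∈ ℂ^H` set `Q^ν = ∏_i Q_i^{ν_i}`.
Then `Q^ν_{D,G}(w) = R^ν_{D,G}(w)`. -/
theorem statement3 {H : Type*} [Fintype H] [DecidableEq H]
    (D G : Matrix H H ℂ) (hD : D.det ≠ 0)
    (Q : H → MvPowerSeries H ℂ)
    (hQ1 : ∀ i, MvPowerSeries.constantCoeff (Q i) = 1)
    (hQ2 : ∀ i, (∏ j, cpow (Q j) (D i j)) +
      MvPowerSeries.X i * ∏ j, cpow (Q j) (G i j) = 1)
    (ν : H → ℂ) :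
    (∏ i, cpow (Q i) (ν i)) = Rfin D G ν := by
  classical
  -- the functional equation for S(ν) = ∏ᵢ Qᵢ^{νᵢ}
  have hfun : ∀ (μ : H → ℂ) (i : H),
      (∏ j, cpow (Q j) (μ j + D i j))
      = (∏ j, cpow (Q j) (μ j))
        - MvPowerSeries.X i * ∏ j, cpow (Q j) (μ j + G i j) := by
    intro μ i
    have hDp : (∏ j, cpow (Q j) (μ j + D i j))
        = (∏ j, cpow (Q j) (μ j)) * ∏ j, cpow (Q j) (D i j) := by
      rw [← Finset.prod_mul_distrib]
      exact Finset.prod_congr rfl (fun j _ => (cpow_mul_cpow (hQ1 j) (μ j) (D i j)).symm)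
    have hGp : (∏ j, cpow (Q j) (μ j + G i j))
        = (∏ j, cpow (Q j) (μ j)) * ∏ j, cpow (Q j) (G i j) := by
      rw [← Finset.prod_mul_distrib]
      exact Finset.prod_congr rfl (fun j _ => (cpow_mul_cpow (hQ1 j) (μ j) (G i j)).symm)
    have hsys : (∏ j, cpow (Q j) (D i j))
        = 1 - MvPowerSeries.X i * ∏ j, cpow (Q j) (G i j) := by
      linear_combination (hQ2 i)
    rw [hDp, hGp, hsys]
    ring
  -- coefficient-level recurrence for S
  have hSrec : ∀ (μ : H → ℂ) (i : H) (N : H →₀ ℕ),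
      MvPowerSeries.coeff N (∏ j, cpow (Q j) (μ j + D i j))
      = MvPowerSeries.coeff N (∏ j, cpow (Q j) (μ j))
        - (if N i = 0 then 0 else MvPowerSeries.coeff (N - Finsupp.single i 1)
            (∏ j, cpow (Q j) (μ j + G i j))) := by
    intro μ i N
    rw [hfun μ i, map_sub, coeff_X_mul']
  -- the coefficients of S are polynomial maps in ν
  have hSpoly : ∀ (s : Finset H) (M : H →₀ ℕ),
      IsPolyMap (fun μ : H → ℂ => MvPowerSeries.coeff M (∏ j ∈ s, cpow (Q j) (μ j))) := by
    intro s
    induction s using Finset.induction_on with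
    | empty =>
      intro M
      exact IsPolyMap.congr (g := fun _ => MvPowerSeries.coeff M 1)
        (fun μ => by rw [Finset.prod_empty]) (IsPolyMap.const _)
    | insert a s' ha ih =>
      intro M
      have hstep : ∀ μ : H → ℂ, MvPowerSeries.coeff M (∏ j ∈ insert a s', cpow (Q j) (μ j))
          = ∑ p ∈ Finset.HasAntidiagonal.antidiagonal M,
              (∑ k ∈ Finset.range (degN p.1 + 1), binomC (μ a) k *
                MvPowerSeries.coeff p.1 ((Q a - 1) ^ k)) *
              MvPowerSeries.coeff p.2 (∏ j ∈ s', cpow (Q j) (μ j)) := by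
        intro μ
        rw [Finset.prod_insert ha, MvPowerSeries.coeff_mul]
        apply Finset.sum_congr rfl
        intro p _
        rfl
      refine IsPolyMap.congr (fun μ => hstep μ) ?_
      apply IsPolyMap.sum
      intro p _
      apply IsPolyMap.mul
      · apply IsPolyMap.sum
        intro k _
        exact ((IsPolyMap.coord a).binomC k).mul (IsPolyMap.const _)
      · exact ih p.2
  have hS0 : (∏ j : H, cpow (Q j) ((0 : H → ℂ) j)) = 1 := by
    rw [Finset.prod_congr rfl (fun j _ => by rw [Pi.zero_apply, cpow_zero_exp (hQ1 j)])]
    exact Finset.prod_const_one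
  -- rows of D span ℂ^H
  have hspan : ∀ ν' : H → ℂ, ∃ t : H → ℂ, ν' = ∑ i, t i • (fun j => D i j) := by
    intro ν'
    refine ⟨fun i => ∑ j, ν' j * D⁻¹ j i, ?_⟩
    funext k
    rw [Finset.sum_apply]
    simp only [Pi.smul_apply, smul_eq_mul]
    have h1 : ∀ i : H, (∑ j, ν' j * D⁻¹ j i) * D i k = ∑ j, ν' j * (D⁻¹ j i * D i k) := by
      intro i
      rw [Finset.sum_mul]
      exact Finset.sum_congr rfl (fun j _ => by ring)
    rw [Finset.sum_congr rfl (fun i _ => h1 i), Finset.sum_comm]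
    have h2 : ∀ j : H, (∑ i, ν' j * (D⁻¹ j i * D i k)) = if j = k then ν' j else 0 := by
      intro j
      rw [← Finset.mul_sum]
      have h := Matrix.nonsing_inv_mul D (isUnit_iff_ne_zero.mpr hD)
      have h3 := congrFun (congrFun h j) k
      rw [Matrix.mul_apply] at h3
      rw [h3, Matrix.one_apply]
      by_cases hjk : j = k <;> simp [hjk]
    rw [Finset.sum_congr rfl (fun j _ => h2 j),
      Finset.sum_ite_eq' Finset.univ k (fun j => ν' j), if_pos (Finset.mem_univ k)]
  -- main strong induction on the total degree
  have key : ∀ n : ℕ, ∀ N : H →₀ ℕ, degN N = n → ∀ μ : H → ℂ,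
      MvPowerSeries.coeff N (∏ j, cpow (Q j) (μ j))
        = MvPowerSeries.coeff N (Rfin D G μ) := by
    intro n
    induction n using Nat.strong_induction_on with
    | _ n IH =>
      intro N hN μ
      by_cases hN0 : N = 0
      · subst hN0
        rw [R_coeff_zero_N]
        rw [MvPowerSeries.coeff_zero_eq_constantCoeff_apply, map_prod]
        exact Finset.prod_eq_one (fun j _ => constantCoeff_cpow (Q j) (μ j))
      · set d : (H → ℂ) → ℂ := fun μ' => MvPowerSeries.coeff N (∏ j, cpow (Q j) (μ' j))
            - MvPowerSeries.coeff N (Rfin D G μ') with hd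
        have hdpoly : IsPolyMap d := (hSpoly Finset.univ N).sub (R_coeff_polymap D G N)
        have hdper : ∀ (i : H) (y : H → ℂ), d (y + fun j => D i j) = d y := by
          intro i y
          rw [hd]
          have e1 : (y + fun j' => D i j') = (fun j => y j + D i j) := rfl
          simp only [e1]
          rw [hSrec y i N, R_recurrence D G hD y N i]
          by_cases hNi : N i = 0
          · rw [if_pos hNi, if_pos hNi]
            ring
          · rw [if_neg hNi, if_neg hNi]
            have hdeg : degN (N - Finsupp.single i 1) < n := by
              have := degN_sub_single N i hNi
              omega
            have hIH := IH (degN (N - Finsupp.single i 1)) hdeg (N - Finsupp.single i 1) rfl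
              (fun j => y j + G i j)
            rw [hIH]
            ring
        have hzero : d 0 = 0 := by
          rw [hd]
          simp only []
          rw [R_coeff_nu_zero D G N hN0, hS0]
          rw [MvPowerSeries.coeff_one, if_neg hN0]
          ring
        have hfinal := hdpoly.const_of_periodic (fun i => fun j => D i j) hspan hdper μ
        rw [hzero] at hfinal
        have hdμ : d μ = 0 := hfinal
        rw [hd] at hdμ
        linear_combination hdμ
  apply MvPowerSeries.ext
  intro N
  exact key (degN N) N rfl ν
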